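/- Let k be a field, V and W finite-dimensional k-vector spaces, and let (f, g) be a nilpotent pair, i.e. f : V →ₗ[k] W, g : W →ₗ[k] V with g ∘ f nilpotent. If v ∈ V is balanced and v' ∈ V is unbalanced, then the intersection of the subspaces T[v] and T[v'] is the zero subspace: T[v] ⊓ T[v'] = ⊥. -/
import Mathlib


/-- `orbitSpan T v` is the submodule `T[v]` spanned by `{T^i v : i ∈ ℕ}`. -/
def orbitSpan {k V : Type*} [Field k] [AddCommGroup V] [Module k V]
    (T : V →ₗ[k] V) (v : V) : Submodule k V :=
  Submodule.span k (Set.range fun i : ℕ => (T ^ i) v)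

section Aux

open Module Submodule Finset
open scoped Classical

variable {k V W : Type*} [Field k] [AddCommGroup V] [Module k V]
  [AddCommGroup W] [Module k W]

private lemma exists_pow_app_zero (T : V →ₗ[k] V) (hT : IsNilpotent T) (v : V) :
    ∃ n, (T ^ n) v = 0 := by
  obtain ⟨n, hn⟩ := hT
  exact ⟨n, by rw [hn]; rfl⟩

/-- The nilpotency order of a vector. -/
noncomputable def ordAt (T : V →ₗ[k] V) (hT : IsNilpotent T) (v : V) : ℕ :=
  Nat.find (exists_pow_app_zero T hT v)

lemma ordAt_spec (T : V →ₗ[k] V) (hT : IsNilpotent T) (v : V) :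
    (T ^ ordAt T hT v) v = 0 := Nat.find_spec (exists_pow_app_zero T hT v)

lemma ordAt_min (T : V →ₗ[k] V) (hT : IsNilpotent T) (v : V) {i : ℕ}
    (hi : i < ordAt T hT v) : (T ^ i) v ≠ 0 :=
  Nat.find_min (exists_pow_app_zero T hT v) hi

lemma pow_app_eq_zero_of_le (T : V →ₗ[k] V) (hT : IsNilpotent T) (v : V) {i : ℕ}
    (hi : ordAt T hT v ≤ i) : (T ^ i) v = 0 := by
  rw [← Nat.sub_add_cancel hi, pow_add, Module.End.mul_apply, ordAt_spec, map_zero]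

lemma coeff_eq_zero (T : V →ₗ[k] V) (hT : IsNilpotent T) (v : V) (a : ℕ → k)
    (h : ∑ i ∈ Finset.range (ordAt T hT v), a i • (T ^ i) v = 0) :
    ∀ i < ordAt T hT v, a i = 0 := by
  by_contra hcon
  push_neg at hcon
  obtain ⟨hjn, hja⟩ := Nat.find_spec hcon
  set j := Nat.find hcon with hjdef
  have hmin : ∀ i < j, i < ordAt T hT v → a i = 0 := by
    intro i hij hin
    by_contra hai
    exact Nat.find_min hcon hij ⟨hin, hai⟩
  have h2 : (T ^ (ordAt T hT v - 1 - j)) (∑ i ∈ Finset.range (ordAt T hT v),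
      a i • (T ^ i) v) = 0 := by rw [h, map_zero]
  rw [map_sum] at h2
  have h3 : ∑ i ∈ Finset.range (ordAt T hT v),
      a i • (T ^ (ordAt T hT v - 1 - j + i)) v = 0 := by
    rw [← h2]
    refine Finset.sum_congr rfl fun i _ => ?_
    rw [map_smul, ← Module.End.mul_apply, ← pow_add]
  have h4 : ∑ i ∈ Finset.range (ordAt T hT v),
      a i • (T ^ (ordAt T hT v - 1 - j + i)) v
      = a j • (T ^ (ordAt T hT v - 1)) v := by
    rw [Finset.sum_eq_single j]
    · rw [show ordAt T hT v - 1 - j + j = ordAt T hT v - 1 by omega]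
    · intro i hi hij
      rcases lt_or_gt_of_ne hij with hlt | hgt
      · rw [hmin i hlt (Finset.mem_range.mp hi), zero_smul]
      · rw [pow_app_eq_zero_of_le T hT v (by omega), smul_zero]
    · intro hj'
      exact absurd (Finset.mem_range.mpr hjn) hj'
  rw [h4] at h3
  have hne := ordAt_min T hT v (i := ordAt T hT v - 1) (by omega)
  rcases smul_eq_zero.mp h3 with h5 | h5
  · exact hja h5
  · exact hne h5

lemma orbitSpan_eq_span_fin (T : V →ₗ[k] V) (hT : IsNilpotent T) (v : V) :
    orbitSpan T v
      = Submodule.span k (Set.range fun i : Fin (ordAt T hT v) => (T ^ (i : ℕ)) v) := by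
  apply le_antisymm <;> rw [orbitSpan, Submodule.span_le]
  · rintro _ ⟨i, rfl⟩
    show (T ^ i) v ∈ _
    by_cases hi : i < ordAt T hT v
    · exact Submodule.subset_span ⟨⟨i, hi⟩, rfl⟩
    · rw [pow_app_eq_zero_of_le T hT v (not_lt.mp hi)]
      exact Submodule.zero_mem _
  · rintro _ ⟨i, rfl⟩
    exact Submodule.subset_span ⟨(i : ℕ), rfl⟩

lemma li_fin (T : V →ₗ[k] V) (hT : IsNilpotent T) (v : V) :
    LinearIndependent k (fun i : Fin (ordAt T hT v) => (T ^ (i : ℕ)) v) := by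
  rw [Fintype.linearIndependent_iff]
  intro c hc i
  have hsum : ∑ j ∈ Finset.range (ordAt T hT v),
      (fun j => if h : j < ordAt T hT v then c ⟨j, h⟩ else 0) j • (T ^ j) v = 0 := by
    rw [Finset.sum_range, ← hc]
    refine Finset.sum_congr rfl fun j _ => ?_
    simp [j.isLt]
  have := coeff_eq_zero T hT v _ hsum i i.isLt
  simpa [i.isLt] using this

lemma finrank_orbitSpan (T : V →ₗ[k] V) (hT : IsNilpotent T) (v : V) :
    Module.finrank k (orbitSpan T v) = ordAt T hT v := by
  rw [orbitSpan_eq_span_fin T hT v, finrank_span_eq_card (li_fin T hT v), Fintype.card_fin]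

lemma exists_rep (T : V →ₗ[k] V) (hT : IsNilpotent T) (v w : V) (hw : w ∈ orbitSpan T v) :
    ∃ a : ℕ → k, w = ∑ i ∈ Finset.range (ordAt T hT v), a i • (T ^ i) v := by
  rw [orbitSpan_eq_span_fin T hT v, mem_span_range_iff_exists_fun] at hw
  obtain ⟨c, hc⟩ := hw
  refine ⟨fun i => if h : i < ordAt T hT v then c ⟨i, h⟩ else 0, ?_⟩
  rw [← hc, Finset.sum_range]
  refine Finset.sum_congr rfl fun i _ => ?_
  simp [i.isLt]

/-- A kernel vector of `T` inside `T[v]` is a multiple of `T^(n-1) v`. -/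
lemma mem_ker_struct (T : V →ₗ[k] V) (hT : IsNilpotent T) (v w : V)
    (hw : w ∈ orbitSpan T v) (hTw : T w = 0) :
    ∃ c : k, w = c • (T ^ (ordAt T hT v - 1)) v := by
  obtain ⟨a, ha⟩ := exists_rep T hT v w hw
  rcases Nat.eq_zero_or_pos (ordAt T hT v) with h0 | hpos
  · refine ⟨0, ?_⟩
    rw [ha, h0]
    simp
  · obtain ⟨m, hm⟩ : ∃ m, ordAt T hT v = m + 1 := ⟨ordAt T hT v - 1, by omega⟩
    have hTsum : ∑ i ∈ Finset.range (m + 1), a i • (T ^ (i + 1)) v = 0 := by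
      rw [← hTw, ha, hm, map_sum]
      refine Finset.sum_congr rfl fun i _ => ?_
      rw [map_smul, ← Module.End.mul_apply, ← pow_succ']
    have hTn : (T ^ (m + 1)) v = 0 := by rw [← hm]; exact ordAt_spec T hT v
    have hsum' : ∑ i ∈ Finset.range m, a i • (T ^ (i + 1)) v = 0 := by
      rw [Finset.sum_range_succ, hTn, smul_zero, add_zero] at hTsum
      exact hTsum
    have hbsum : ∑ j ∈ Finset.range (ordAt T hT v),
        (fun j => if j = 0 then 0 else a (j - 1)) j • (T ^ j) v = 0 := by
      rw [hm, Finset.sum_range_succ']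
      simpa using hsum'
    have hbz := coeff_eq_zero T hT v _ hbsum
    have haz : ∀ i < m, a i = 0 := by
      intro i hi
      have := hbz (i + 1) (by omega)
      simpa using this
    refine ⟨a m, ?_⟩
    rw [show ordAt T hT v - 1 = m by omega]
    rw [ha, hm, Finset.sum_range_succ, Finset.sum_eq_zero fun i hi => by
      rw [haz i (Finset.mem_range.mp hi), zero_smul], zero_add]

lemma comp_pow (f : V →ₗ[k] W) (g : W →ₗ[k] V) (i : ℕ) :
    f ∘ₗ ((g ∘ₗ f) ^ i) = ((f ∘ₗ g) ^ i) ∘ₗ f := by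
  induction i with
  | zero => ext x; simp
  | succ n ih =>
    rw [pow_succ, pow_succ, Module.End.mul_eq_comp, Module.End.mul_eq_comp,
      ← LinearMap.comp_assoc, ih]
    ext x
    simp

lemma pow_app_comm (f : V →ₗ[k] W) (g : W →ₗ[k] V) (i : ℕ) (x : V) :
    f (((g ∘ₗ f) ^ i) x) = ((f ∘ₗ g) ^ i) (f x) := by
  have := congrArg (fun h : V →ₗ[k] W => h x) (comp_pow f g i)
  simpa using this

lemma isNilpotent_swap (f : V →ₗ[k] W) (g : W →ₗ[k] V) (hnil : IsNilpotent (g ∘ₗ f)) :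
    IsNilpotent (f ∘ₗ g) := by
  obtain ⟨n, hn⟩ := hnil
  refine ⟨n + 1, ?_⟩
  ext w
  have h1 : ((f ∘ₗ g) ^ (n + 1)) w = ((f ∘ₗ g) ^ n) (f (g w)) := by
    rw [pow_succ, Module.End.mul_apply]
    rfl
  rw [h1, ← pow_app_comm f g n (g w), hn]
  simp

lemma orbitSpan_pow_mem (T : V →ₗ[k] V) (v w : V) (hw : w ∈ orbitSpan T v) (j : ℕ) :
    (T ^ j) w ∈ orbitSpan T v := by
  induction j with
  | zero => simpa using hw
  | succ m ih =>
    have hmap : T ((T ^ m) w) ∈ orbitSpan T v := by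
      revert ih
      generalize (T ^ m) w = u
      intro hu
      refine Submodule.span_induction ?_ ?_ ?_ ?_ hu
      · rintro _ ⟨i, rfl⟩
        refine Submodule.subset_span ⟨i + 1, ?_⟩
        show (T ^ (i + 1)) v = T ((T ^ i) v)
        rw [pow_succ', Module.End.mul_apply]
      · simp
      · intro x y _ _ hx hy
        rw [map_add]; exact Submodule.add_mem _ hx hy
      · intro c x _ hx
        rw [map_smul]; exact Submodule.smul_mem _ c hx
    rw [pow_succ', Module.End.mul_apply]
    exact hmap

end Aux

theorem balanced_unbalanced_orbitSpans_disjoint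
    (k V W : Type*) [Field k] [AddCommGroup V] [Module k V] [FiniteDimensional k V]
    [AddCommGroup W] [Module k W] [FiniteDimensional k W]
    (f : V →ₗ[k] W) (g : W →ₗ[k] V) (hnil : IsNilpotent (g ∘ₗ f))
    (v v' : V)
    (hv : Module.finrank k (orbitSpan (g ∘ₗ f) v) =
      Module.finrank k (orbitSpan (f ∘ₗ g) (f v)))
    (hv' : Module.finrank k (orbitSpan (f ∘ₗ g) (f v')) + 1 =
      Module.finrank k (orbitSpan (g ∘ₗ f) v')) :
    orbitSpan (g ∘ₗ f) v ⊓ orbitSpan (g ∘ₗ f) v' = ⊥ := by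
  have hT : IsNilpotent (g ∘ₗ f) := hnil
  have hT' : IsNilpotent (f ∘ₗ g) := isNilpotent_swap f g hnil
  rw [finrank_orbitSpan (g ∘ₗ f) hT v, finrank_orbitSpan (f ∘ₗ g) hT' (f v)] at hv
  rw [finrank_orbitSpan (f ∘ₗ g) hT' (f v'), finrank_orbitSpan (g ∘ₗ f) hT v'] at hv'
  -- core: any common kernel vector is zero
  have core : ∀ w : V, w ∈ orbitSpan (g ∘ₗ f) v → w ∈ orbitSpan (g ∘ₗ f) v' →
      (g ∘ₗ f) w = 0 → w = 0 := by
    intro w hw1 hw2 hTw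
    obtain ⟨c, hc⟩ := mem_ker_struct (g ∘ₗ f) hT v w hw1 hTw
    obtain ⟨c', hc'⟩ := mem_ker_struct (g ∘ₗ f) hT v' w hw2 hTw
    have hfv' : f (((g ∘ₗ f) ^ (ordAt (g ∘ₗ f) hT v' - 1)) v') = 0 := by
      rw [pow_app_comm f g _ v']
      exact pow_app_eq_zero_of_le (f ∘ₗ g) hT' (f v') (by omega)
    have hfw : f w = 0 := by rw [hc', map_smul, hfv', smul_zero]
    rcases Nat.eq_zero_or_pos (ordAt (g ∘ₗ f) hT v) with h0 | hpos
    · have hv0 : v = 0 := by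
        have := ordAt_spec (g ∘ₗ f) hT v
        rw [h0, pow_zero] at this
        exact this
      rw [hc, h0]
      simp [hv0]
    · have hne : f (((g ∘ₗ f) ^ (ordAt (g ∘ₗ f) hT v - 1)) v) ≠ 0 := by
        rw [pow_app_comm f g _ v]
        exact ordAt_min (f ∘ₗ g) hT' (f v) (by omega)
      have hz : c • f (((g ∘ₗ f) ^ (ordAt (g ∘ₗ f) hT v - 1)) v) = 0 := by
        rw [← map_smul, ← hc, hfw]
      rcases smul_eq_zero.mp hz with hc0 | h
      · rw [hc, hc0, zero_smul]
      · exact absurd h hne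
  rw [eq_bot_iff]
  intro u hu
  rw [Submodule.mem_inf] at hu
  rw [Submodule.mem_bot]
  rcases Nat.eq_zero_or_pos (ordAt (g ∘ₗ f) hT u) with h0 | hpos
  · have := ordAt_spec (g ∘ₗ f) hT u
    rw [h0, pow_zero] at this
    exact this
  · exfalso
    have hwne : ((g ∘ₗ f) ^ (ordAt (g ∘ₗ f) hT u - 1)) u ≠ 0 :=
      ordAt_min (g ∘ₗ f) hT u (by omega)
    have hTw : (g ∘ₗ f) (((g ∘ₗ f) ^ (ordAt (g ∘ₗ f) hT u - 1)) u) = 0 := by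
      rw [← Module.End.mul_apply, ← pow_succ']
      have h1 : ordAt (g ∘ₗ f) hT u - 1 + 1 = ordAt (g ∘ₗ f) hT u := by omega
      rw [h1]
      exact ordAt_spec (g ∘ₗ f) hT u
    exact hwne (core _ (orbitSpan_pow_mem (g ∘ₗ f) v u hu.1 _)
      (orbitSpan_pow_mem (g ∘ₗ f) v' u hu.2 _) hTw)
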